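/- Every Borel-closed set of monomials has a unique minimal set of Borel generators, namely the set of minimal elements of its minimal monomial generating set under the Borel order. Concretely: if B is a finite antichain (under divisibility) of monomials generating a monomial ideal closed under Borel moves, then the set T of Borel-order-minimal elements of B satisfies Borel(T) = Borel(B), and for any m in T and any subset T' of B not containing m, m is not in Borel(T'). -/

import Mathlib

/-- Borel order: `m1` precedes `m2`. -/
def BorelLe (m1 m2 : Multiset ℕ) : Prop :=
  Multiset.card m2 ≤ Multiset.card m1 ∧
    ∀ j < Multiset.card m2,
      (m1.sort (· ≤ ·)).getD j 0 ≤ (m2.sort (· ≤ ·)).getD j 0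

/-- The monomials of the smallest Borel-closed ideal containing `T`:
those divisible by some monomial preceding an element of `T` in the Borel order. -/
def BorelIdeal (T : Set (Multiset ℕ)) : Set (Multiset ℕ) :=
  {u | ∃ m ∈ T, ∃ v, BorelLe v m ∧ v ≤ u}

/-- A set of monomials is Borel-closed if it is closed upward under
divisibility and closed under Borel moves (replacing `x_j` by `x_i`, `i < j`). -/
def BorelClosed (B : Set (Multiset ℕ)) : Prop :=
  (∀ m ∈ B, ∀ u : Multiset ℕ, m ≤ u → u ∈ B) ∧
  (∀ m ∈ B, ∀ i j : ℕ, j ∈ m → i < j → (i ::ₘ m.erase j) ∈ B)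

theorem BorelLe.trans {a b c : Multiset ℕ} (h1 : BorelLe a b) (h2 : BorelLe b c) :
    BorelLe a c := by
  refine ⟨h2.1.trans h1.1, fun j hj => ?_⟩
  exact (h1.2 j (lt_of_lt_of_le hj h2.1)).trans (h2.2 j hj)

theorem sublist_getD_le {l₁ l₂ : List ℕ} (h : List.Sublist l₁ l₂) (hs : l₂.Pairwise (· ≤ ·)) :
    ∀ j < l₁.length, l₂.getD j 0 ≤ l₁.getD j 0 := by
  induction h with
  | slnil => intro j hj; simp at hj
  | @cons l₁ l₂ a h ih =>
    intro j hj
    have hs' : l₂.Pairwise (· ≤ ·) := hs.of_cons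
    cases j with
    | zero =>
      have hlen : 0 < l₁.length := hj
      have hmem : l₁.getD 0 0 ∈ l₁ := by
        rw [List.getD_eq_getElem _ _ hlen]; exact List.getElem_mem _
      have hmem2 : l₁.getD 0 0 ∈ l₂ := h.subset hmem
      simpa using (List.rel_of_pairwise_cons hs hmem2)
    | succ k =>
      have hk : k < l₁.length := Nat.lt_of_succ_lt hj
      have h1 : l₂.getD k 0 ≤ l₁.getD k 0 := ih hs' k hk
      have hk2 : k < l₂.length := lt_of_lt_of_le hk h.length_le
      have h0 : (a :: l₂).getD (k+1) 0 = l₂.getD k 0 := by simp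
      rw [h0]
      have h2 : l₁.getD k 0 ≤ l₁.getD (k+1) 0 ∨ l₁.length ≤ k + 1 := by
        rcases Nat.lt_or_ge (k+1) l₁.length with hlt | hge
        · left
          rw [List.getD_eq_getElem _ _ hk, List.getD_eq_getElem _ _ hlt]
          exact (List.pairwise_iff_getElem.mp ((hs'.sublist h) : l₁.Pairwise (· ≤ ·)))
            k (k+1) hk hlt (Nat.lt_succ_self k)
        · right; exact hge
      rcases h2 with h2 | h2
      · exact h1.trans h2
      · omega
  | @cons_cons l₁ l₂ a h ih =>
    intro j hj
    have hs' : l₂.Pairwise (· ≤ ·) := hs.of_cons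
    cases j with
    | zero => simp
    | succ k =>
      have hk : k < l₁.length := by simpa using hj
      simpa using ih hs' k hk

theorem borelLe_of_le {v m : Multiset ℕ} (h : v ≤ m) : BorelLe m v := by
  refine ⟨Multiset.card_le_card h, fun j hj => ?_⟩
  have hsub : List.Sublist (v.sort (· ≤ ·)) (m.sort (· ≤ ·)) := by
    apply List.sublist_of_subperm_of_pairwise _ (Multiset.pairwise_sort _ _) (Multiset.pairwise_sort _ _)
    rw [← Multiset.coe_le, Multiset.sort_eq, Multiset.sort_eq]
    exact h
  have hlen : j < (v.sort (· ≤ ·)).length := by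
    rwa [Multiset.length_sort]
  exact sublist_getD_le hsub (Multiset.pairwise_sort _ _) j hlen

theorem unique_minimal_borel_generators (B : Finset (Multiset ℕ))
    (hanti : ∀ a ∈ B, ∀ b ∈ B, a ≤ b → a = b)
    (hclosed : BorelClosed (BorelIdeal ↑B)) :
    BorelIdeal {m | m ∈ B ∧ ∀ m' ∈ B, BorelLe m m' → m = m'} = BorelIdeal ↑B ∧
    ∀ m ∈ B, (∀ m' ∈ B, BorelLe m m' → m = m') →
      ∀ T' : Set (Multiset ℕ), T' ⊆ ↑B → m ∉ T' → m ∉ BorelIdeal T' := by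
  constructor
  · apply Set.Subset.antisymm
    · rintro u ⟨m, hm, v, hv, hvu⟩
      exact ⟨m, hm.1, v, hv, hvu⟩
    · -- key: every m ∈ B is Borel-le some Borel-minimal element of B
      classical
      have key : ∀ m ∈ B, ∃ m' ∈ B, BorelLe m m' ∧ ∀ m'' ∈ B, BorelLe m' m'' → m' = m'' := by
        intro m hm
        have : ∀ n : ℕ, ∀ m ∈ B, (B.filter (fun b => BorelLe m b)).card ≤ n →
            ∃ m' ∈ B, BorelLe m m' ∧ ∀ m'' ∈ B, BorelLe m' m'' → m' = m'' := by
          intro n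
          induction n with
          | zero =>
            intro m hm hcard
            exfalso
            have : m ∈ B.filter (fun b => BorelLe m b) := by
              simp [hm]
              exact ⟨le_refl _, fun j _ => le_refl _⟩
            have := Finset.card_pos.mpr ⟨m, this⟩
            omega
          | succ n ih =>
            intro m hm hcard
            by_cases hmin : ∀ m'' ∈ B, BorelLe m m'' → m = m''
            · exact ⟨m, hm, ⟨le_refl _, fun j _ => le_refl _⟩, hmin⟩
            · push_neg at hmin
              obtain ⟨m', hm', hle, hne⟩ := hmin
              have hsub : B.filter (fun b => BorelLe m' b) ⊆ B.filter (fun b => BorelLe m b) := by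
                intro b hb
                simp only [Finset.mem_filter] at hb ⊢
                exact ⟨hb.1, hle.trans hb.2⟩
              have hmnotin : m ∉ B.filter (fun b => BorelLe m' b) := by
                simp only [Finset.mem_filter, not_and]
                intro _ hle'
                apply hne
                have hc : Multiset.card m = Multiset.card m' := le_antisymm hle'.1 hle.1
                have := fun j hj => le_antisymm (hle.2 j hj) (hle'.2 j (hc ▸ hj))
                have hsort : m.sort (· ≤ ·) = m'.sort (· ≤ ·) := by
                  apply List.ext_getElem
                  · rw [Multiset.length_sort, Multiset.length_sort, hc]
                  · intro i h1 h2
                    have hi : i < Multiset.card m' := by rwa [Multiset.length_sort] at h2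
                    have := this i hi
                    rwa [List.getD_eq_getElem _ _ h1, List.getD_eq_getElem _ _ h2] at this
                have : (m.sort (· ≤ ·) : Multiset ℕ) = (m'.sort (· ≤ ·) : Multiset ℕ) := by
                  rw [hsort]
                rwa [Multiset.sort_eq, Multiset.sort_eq] at this
              have hmin2 : m ∈ B.filter (fun b => BorelLe m b) := by
                simp only [Finset.mem_filter]
                exact ⟨hm, le_refl _, fun j _ => le_refl _⟩
              have hcard' : (B.filter (fun b => BorelLe m' b)).card < (B.filter (fun b => BorelLe m b)).card :=
                Finset.card_lt_card (Finset.ssubset_iff_of_subset hsub |>.mpr ⟨m, hmin2, hmnotin⟩)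
              obtain ⟨m'', h1, h2, h3⟩ := ih m' hm' (by omega)
              exact ⟨m'', h1, hle.trans h2, h3⟩
        exact this (B.filter (fun b => BorelLe m b)).card m hm le_rfl
      rintro u ⟨m, hm, v, hv, hvu⟩
      obtain ⟨m', hm', hle, hmin⟩ := key m hm
      exact ⟨m', ⟨hm', hmin⟩, v, hv.trans hle, hvu⟩
  · rintro m hm hmin T' hT' hmT' ⟨m', hm', v, hv, hvm⟩
    have h1 : BorelLe m v := borelLe_of_le hvm
    have h2 : BorelLe m m' := h1.trans hv
    have := hmin m' (hT' hm') h2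
    exact hmT' (this ▸ hm')
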